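/- Fix q ∈ ℂ with q ≠ 0 and q not a root of unity, an integer n ≥ 1, and set c(n) = −1/(qⁿ + q⁻ⁿ)² and λ_k = q^{n−2k}/(qⁿ + q⁻ⁿ) for k = 1, …, n. Let (e₋₁, e₁, A) be a Podleś representation with parameter c(n) on a finite-dimensional complex vector space V such that A is invertible. Then V = ⊕_{k=1}^{n} ker(A − λ_k·id); for every 1 ≤ k ≤ n−1 the restriction of e₁ is a linear isomorphism from ker(A − λ_k·id) onto ker(A − λ_{k+1}·id); in particular all the eigenspaces ker(A − λ_k·id) have the same dimension d and dim V = n·d. Moreover V is a direct sum of d subspaces, each of dimension n and each invariant under e₋₁, e₁ and A. -/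

import Mathlib

/-- A Podleś representation with parameter `c` on a complex vector space. -/
def PodlesRep (q c : ℂ) {V : Type*} [AddCommGroup V] [Module ℂ V]
    (em e1 A : Module.End ℂ V) : Prop :=
  em * e1 = A - A ^ 2 + c • (1 : Module.End ℂ V) ∧
  e1 * em = q ^ 2 • A - q ^ 4 • A ^ 2 + c • (1 : Module.End ℂ V) ∧
  e1 * A = q ^ 2 • (A * e1) ∧
  em * A = (q ^ 2)⁻¹ • (A * em)

namespace Stmt6Aux

noncomputable def L (q : ℂ) (n : ℕ) (j : ℤ) : ℂ :=
  q ^ ((n : ℤ) - 2 * j) / (q ^ (n : ℤ) + q ^ (-(n : ℤ)))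

section Scalars
variable {q : ℂ} {n : ℕ} (hq : q ≠ 0) (hq' : ∀ k : ℕ, 0 < k → q ^ k ≠ 1) (hn : 1 ≤ n)

include hq hq' in
lemma zpow_ne_one : ∀ m : ℤ, m ≠ 0 → q ^ m ≠ 1 := by
  have hpos : ∀ m : ℤ, 0 < m → q ^ m ≠ 1 := by
    intro m hm h
    have : q ^ m.toNat = 1 := by rw [← zpow_natCast, Int.toNat_of_nonneg hm.le]; exact h
    exact hq' m.toNat (by omega) this
  intro m hm h
  rcases lt_or_gt_of_ne hm with hlt | hgt
  · exact hpos (-m) (by omega) (by rw [zpow_neg, h, inv_one])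
  · exact hpos m hgt h

include hq hq' in
lemma zpow_inj {a b : ℤ} (h : q ^ a = q ^ b) : a = b := by
  by_contra hab
  exact zpow_ne_one hq hq' (a - b) (by omega)
    (by rw [zpow_sub₀ hq, h, div_self (zpow_ne_zero _ hq)])

include hq hq' hn in
lemma s_ne : q ^ (n : ℤ) + q ^ (-(n : ℤ)) ≠ 0 := by
  intro h
  have h1 : q ^ (2 * (n : ℤ)) = -1 := by
    have h2 := congrArg (· * q ^ (n : ℤ)) h
    simp only [add_mul, ← zpow_add₀ hq, zero_mul, neg_add_cancel, zpow_zero] at h2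
    rw [two_mul]
    linear_combination h2
  have h4 : q ^ (4 * (n : ℤ)) = 1 := by
    rw [show (4 : ℤ) * n = 2 * n + 2 * n by ring, zpow_add₀ hq, h1]
    norm_num
  exact zpow_ne_one hq hq' (4 * n) (by omega) h4

include hq hq' hn in
lemma L_inj {a b : ℤ} (h : L q n a = L q n b) : a = b := by
  unfold L at h
  rw [div_eq_div_iff (s_ne hq hq' hn) (s_ne hq hq' hn)] at h
  have h2 := mul_right_cancel₀ (s_ne hq hq' hn) h
  have h3 := zpow_inj hq hq' h2
  omega

include hq in
lemma L_succ (k : ℤ) : L q n (k + 1) = (q ^ 2)⁻¹ * L q n k := by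
  unfold L
  rw [show (n : ℤ) - 2 * (k + 1) = (-2) + ((n : ℤ) - 2 * k) by ring, zpow_add₀ hq,
    show (-2 : ℤ) = -(2 : ℕ) by norm_num, zpow_neg, zpow_natCast]
  ring

include hq in
lemma L_pred (k : ℤ) : L q n (k - 1) = q ^ 2 * L q n k := by
  have h := L_succ (n := n) hq (k - 1)
  rw [sub_add_cancel] at h
  rw [h]
  field_simp

include hq hq' hn in
lemma sum0n : L q n 0 + L q n (n : ℤ) = 1 := by
  unfold L
  rw [show (n : ℤ) - 2 * (n : ℤ) = -(n : ℤ) by ring, show (n : ℤ) - 2 * 0 = (n : ℤ) by ring,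
    ← add_div]
  exact div_self (s_ne hq hq' hn)

include hq in
lemma prod0n : L q n 0 * L q n (n : ℤ) = 1 / (q ^ (n : ℤ) + q ^ (-(n : ℤ))) ^ 2 := by
  unfold L
  rw [show (n : ℤ) - 2 * (n : ℤ) = -(n : ℤ) by ring, show (n : ℤ) - 2 * 0 = (n : ℤ) by ring,
    div_mul_div_comm, ← zpow_add₀ hq, add_neg_cancel, zpow_zero, sq]

include hq hq' hn in
lemma sum1 : q ^ 4 * (L q n 1 + L q n ((n : ℤ) + 1)) = q ^ 2 := by
  have ha : q ^ (n : ℤ) ≠ 0 := zpow_ne_zero _ hq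
  have hs : q ^ (n : ℤ) + (q ^ (n : ℤ))⁻¹ ≠ 0 := by
    simpa [zpow_neg] using s_ne hq hq' hn
  unfold L
  rw [show (n : ℤ) - 2 * 1 = (n : ℤ) + (-2) by ring,
    show (n : ℤ) - 2 * ((n : ℤ) + 1) = -(n : ℤ) + (-2) by ring,
    zpow_add₀ hq, zpow_add₀ hq, ← add_div,
    show q ^ ((-2 : ℤ)) = (q ^ 2)⁻¹ by rw [show (-2 : ℤ) = -((2 : ℕ) : ℤ) by norm_num, zpow_neg, zpow_natCast],
    show q ^ (n:ℤ) * (q ^ 2)⁻¹ + q ^ (-(n:ℤ)) * (q ^ 2)⁻¹ = (q ^ 2)⁻¹ * (q ^ (n:ℤ) + q ^ (-(n:ℤ))) by ring,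
    mul_div_assoc, div_self (s_ne hq hq' hn), mul_one]
  field_simp

include hq hq' hn in
lemma prod1 : q ^ 4 * (L q n 1 * L q n ((n : ℤ) + 1)) = 1 / (q ^ (n : ℤ) + q ^ (-(n : ℤ))) ^ 2 := by
  have ha : q ^ (n : ℤ) ≠ 0 := zpow_ne_zero _ hq
  have hs : q ^ (n : ℤ) + (q ^ (n : ℤ))⁻¹ ≠ 0 := by
    simpa [zpow_neg] using s_ne hq hq' hn
  unfold L
  rw [show (n : ℤ) - 2 * 1 = (n : ℤ) + (-2) by ring,
    show (n : ℤ) - 2 * ((n : ℤ) + 1) = -(n : ℤ) + (-2) by ring,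
    div_mul_div_comm, ← zpow_add₀ hq,
    show (n:ℤ) + (-2) + (-(n:ℤ) + (-2)) = -((4:ℕ):ℤ) by push_cast; ring, zpow_neg, zpow_natCast, sq]
  rw [show (q ^ (n:ℤ) + q ^ (-(n:ℤ))) * (q ^ (n:ℤ) + q ^ (-(n:ℤ))) = (q ^ (n:ℤ) + q ^ (-(n:ℤ))) ^ 2 by ring]
  field_simp

include hq hq' hn in
lemma factA (c ν : ℂ) (hc : c = -1 / (q ^ (n : ℤ) + q ^ (-(n : ℤ))) ^ 2) :
    ν - ν ^ 2 + c = -((ν - L q n 0) * (ν - L q n (n : ℤ))) := by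
  subst hc
  linear_combination prod0n (n := n) hq - ν * sum0n hq hq' hn

include hq hq' hn in
lemma factB (c ν : ℂ) (hc : c = -1 / (q ^ (n : ℤ) + q ^ (-(n : ℤ))) ^ 2) :
    q ^ 2 * ν - q ^ 4 * ν ^ 2 + c = -(q ^ 4 * ((ν - L q n 1) * (ν - L q n ((n : ℤ) + 1)))) := by
  subst hc
  linear_combination prod1 hq hq' hn - ν * sum1 hq hq' hn

include hq in
lemma Lshift (t k : ℤ) : q ^ (2 * t) * L q n k = L q n (k - t) := by
  unfold L
  rw [← mul_div_assoc, ← zpow_add₀ hq, show 2 * t + ((n:ℤ) - 2 * k) = (n:ℤ) - 2 * (k - t) by ring]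

end Scalars

section Ops
variable {V : Type*} [AddCommGroup V] [Module ℂ V]
variable {q : ℂ} {n : ℕ} {em e1 A : Module.End ℂ V}
variable (hq : q ≠ 0) (hq' : ∀ k : ℕ, 0 < k → q ^ k ≠ 1) (hn : 1 ≤ n)
variable (hrep : PodlesRep q (-1 / (q ^ (n : ℤ) + q ^ (-(n : ℤ))) ^ 2) em e1 A)

set_option linter.unusedSectionVars false

lemma pker (B : Module.End ℂ V) (μ : ℂ) (x : V) :
    (B - μ • 1) x = 0 ↔ B x = μ • x := by
  simp [LinearMap.sub_apply, LinearMap.smul_apply, Module.End.one_apply, sub_eq_zero]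

lemma quad (B : Module.End ℂ V) (α β : ℂ) :
    (B - α • 1) * (B - β • 1) = B ^ 2 - (α + β) • B + (α * β) • (1 : Module.End ℂ V) := by
  simp only [mul_sub, sub_mul, smul_mul_assoc, mul_smul_comm, one_mul, mul_one, smul_smul, pow_two]
  module

include hq hq' hn hrep in
lemma fact_me1 : em * e1 = -((A - L q n 0 • 1) * (A - L q n (n : ℤ) • 1)) := by
  rw [quad, hrep.1]
  match_scalars
  · linear_combination (-1 : ℂ) * sum0n hq hq' hn
  · ring
  · linear_combination prod0n (n := n) hq

include hq hrep in
lemma e1_eig (μ : ℂ) (x : V) (hx : A x = μ • x) : A (e1 x) = ((q ^ 2)⁻¹ * μ) • e1 x := by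
  have h := congrArg (fun f : Module.End ℂ V => f x) hrep.2.2.1
  simp only [Module.End.mul_apply, LinearMap.smul_apply] at h
  rw [hx, map_smul] at h
  have h2 : (q ^ 2)⁻¹ • (μ • e1 x) = (q ^ 2)⁻¹ • (q ^ 2 • A (e1 x)) := by rw [h]
  rw [smul_smul, smul_smul, inv_mul_cancel₀ (pow_ne_zero 2 hq), one_smul] at h2
  rw [← h2]

include hq hrep in
lemma em_eig (μ : ℂ) (x : V) (hx : A x = μ • x) : A (em x) = (q ^ 2 * μ) • em x := by
  have h := congrArg (fun f : Module.End ℂ V => f x) hrep.2.2.2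
  simp only [Module.End.mul_apply, LinearMap.smul_apply] at h
  rw [hx, map_smul] at h
  have h2 : q ^ 2 • (μ • em x) = q ^ 2 • ((q ^ 2)⁻¹ • A (em x)) := by rw [h]
  rw [smul_smul, smul_smul, mul_inv_cancel₀ (pow_ne_zero 2 hq), one_smul] at h2
  rw [← h2]

include hrep in
lemma me1_eig (μ : ℂ) (x : V) (hx : A x = μ • x) :
    em (e1 x) = (μ - μ ^ 2 + -1 / (q ^ (n : ℤ) + q ^ (-(n : ℤ))) ^ 2) • x := by
  have h := congrArg (fun f : Module.End ℂ V => f x) hrep.1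
  simp only [Module.End.mul_apply, LinearMap.add_apply, LinearMap.sub_apply, LinearMap.smul_apply,
    Module.End.one_apply, pow_two, Module.End.mul_apply] at h
  rw [hx, map_smul, hx, smul_smul] at h
  rw [h]
  module

include hrep in
lemma e1m_eig (μ : ℂ) (x : V) (hx : A x = μ • x) :
    e1 (em x) = (q ^ 2 * μ - q ^ 4 * μ ^ 2 + -1 / (q ^ (n : ℤ) + q ^ (-(n : ℤ))) ^ 2) • x := by
  have h := congrArg (fun f : Module.End ℂ V => f x) hrep.2.1
  simp only [Module.End.mul_apply, LinearMap.add_apply, LinearMap.sub_apply, LinearMap.smul_apply,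
    Module.End.one_apply, pow_two, Module.End.mul_apply] at h
  rw [hx, map_smul, hx, smul_smul, smul_smul] at h
  rw [h]
  module

include hq hrep in
lemma comm1pt (k : ℤ) (z : V) :
    (A - L q n (k + 1) • 1) (e1 z) = (q ^ 2)⁻¹ • e1 ((A - L q n k • 1) z) := by
  have h := congrArg (fun f : Module.End ℂ V => f z) hrep.2.2.1
  simp only [Module.End.mul_apply, LinearMap.smul_apply] at h
  have hA1 : A (e1 z) = (q ^ 2)⁻¹ • e1 (A z) := by
    have h2 : (q ^ 2)⁻¹ • e1 (A z) = (q ^ 2)⁻¹ • (q ^ 2 • A (e1 z)) := by rw [h]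
    rw [smul_smul, inv_mul_cancel₀ (pow_ne_zero 2 hq), one_smul] at h2
    rw [h2]
  simp only [LinearMap.sub_apply, LinearMap.smul_apply, Module.End.one_apply, map_sub, map_smul,
    hA1, L_succ (n := n) hq, smul_sub, smul_smul]

include hq hq' hrep in
lemma exists_top [FiniteDimensional ℂ V] (μ : ℂ) (hμ : μ ≠ 0) (x : V) (hx0 : x ≠ 0)
    (hx : A x = μ • x) :
    ∃ (j : ℕ) (u : V), u ≠ 0 ∧ A u = (q ^ (-2 * (j : ℤ)) * μ) • u ∧ e1 u = 0 := by
  have hq2 : ((q ^ 2)⁻¹ : ℂ) = q ^ ((-2 : ℤ)) := by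
    rw [show (-2 : ℤ) = -((2:ℕ):ℤ) by norm_num, zpow_neg, zpow_natCast]
  have heig : ∀ j : ℕ, A ((e1 ^ j) x) = (q ^ (-2 * (j : ℤ)) * μ) • (e1 ^ j) x := by
    intro j
    induction j with
    | zero => simpa using hx
    | succ j ih =>
      rw [pow_succ', Module.End.mul_apply, e1_eig hq hrep _ _ ih, hq2, ← mul_assoc,
        ← zpow_add₀ hq]
      congr 3
      push_cast
      ring
  by_contra hcon
  push_neg at hcon
  have hnz : ∀ j : ℕ, (e1 ^ j) x ≠ 0 := by
    intro j
    induction j with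
    | zero => simpa using hx0
    | succ j ih =>
      rw [pow_succ', Module.End.mul_apply]
      exact hcon j _ ih (heig j)
  have hinj : Function.Injective
      fun j : Fin (Module.finrank ℂ V + 1) => q ^ (-2 * ((j : ℕ) : ℤ)) * μ := by
    intro a b hab
    simp only [] at hab
    have h1 := mul_right_cancel₀ hμ hab
    have h2 := zpow_inj hq hq' h1
    exact Fin.ext (by omega)
  have hli := Module.End.eigenvectors_linearIndependent' A _ hinj
      (fun j : Fin (Module.finrank ℂ V + 1) => (e1 ^ (j : ℕ)) x)
      (fun j => ⟨Module.End.mem_eigenspace_iff.2 (heig _), hnz _⟩)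
  have hcard := hli.fintype_card_le_finrank
  simp only [Fintype.card_fin] at hcard
  omega

include hq hq' hrep in
lemma exists_bot [FiniteDimensional ℂ V] (μ : ℂ) (hμ : μ ≠ 0) (x : V) (hx0 : x ≠ 0)
    (hx : A x = μ • x) :
    ∃ (j : ℕ) (u : V), u ≠ 0 ∧ A u = (q ^ (2 * (j : ℤ)) * μ) • u ∧ em u = 0 := by
  have hq2 : ((q ^ 2) : ℂ) = q ^ ((2 : ℤ)) := by
    rw [show (2 : ℤ) = ((2:ℕ):ℤ) by norm_num, zpow_natCast]
  have heig : ∀ j : ℕ, A ((em ^ j) x) = (q ^ (2 * (j : ℤ)) * μ) • (em ^ j) x := by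
    intro j
    induction j with
    | zero => simpa using hx
    | succ j ih =>
      rw [pow_succ', Module.End.mul_apply, em_eig hq hrep _ _ ih, hq2, ← mul_assoc,
        ← zpow_add₀ hq]
      congr 3
      push_cast
      ring
  by_contra hcon
  push_neg at hcon
  have hnz : ∀ j : ℕ, (em ^ j) x ≠ 0 := by
    intro j
    induction j with
    | zero => simpa using hx0
    | succ j ih =>
      rw [pow_succ', Module.End.mul_apply]
      exact hcon j _ ih (heig j)
  have hinj : Function.Injective
      fun j : Fin (Module.finrank ℂ V + 1) => q ^ (2 * ((j : ℕ) : ℤ)) * μ := by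
    intro a b hab
    simp only [] at hab
    have h1 := mul_right_cancel₀ hμ hab
    have h2 := zpow_inj hq hq' h1
    exact Fin.ext (by omega)
  have hli := Module.End.eigenvectors_linearIndependent' A _ hinj
      (fun j : Fin (Module.finrank ℂ V + 1) => (em ^ (j : ℕ)) x)
      (fun j => ⟨Module.End.mem_eigenspace_iff.2 (heig _), hnz _⟩)
  have hcard := hli.fintype_card_le_finrank
  simp only [Fintype.card_fin] at hcard
  omega

include hq hq' hn hrep in
lemma eig_class [FiniteDimensional ℂ V] (hA : Function.Bijective ⇑A) (μ : ℂ) (x : V)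
    (hx0 : x ≠ 0) (hx : A x = μ • x) :
    ∃ k : ℤ, 1 ≤ k ∧ k ≤ (n : ℤ) ∧ μ = L q n k := by
  have hμ : μ ≠ 0 := by
    rintro rfl
    exact hx0 (hA.1 (show A x = A 0 by simpa using hx))
  obtain ⟨j, u, hu0, huA, hu1⟩ := exists_top hq hq' hrep μ hμ x hx0 hx
  obtain ⟨i, w, hw0, hwA, hw1⟩ := exists_bot hq hq' hrep μ hμ x hx0 hx
  set ν := q ^ (-2 * (j : ℤ)) * μ with hν
  have h1 : (ν - ν ^ 2 + -1 / (q ^ (n : ℤ) + q ^ (-(n : ℤ))) ^ 2) • u = 0 := by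
    rw [← me1_eig hrep ν u huA, hu1, map_zero]
  have h2 := (smul_eq_zero.1 h1).resolve_right hu0
  rw [factA hq hq' hn _ ν rfl] at h2
  have h3 := mul_eq_zero.1 (neg_eq_zero.1 h2)
  have hμν : μ = q ^ (2 * (j : ℤ)) * ν := by
    rw [hν, ← mul_assoc, ← zpow_add₀ hq]
    norm_num
  set ν' := q ^ (2 * (i : ℤ)) * μ with hν'
  have h4 : (q^2 * ν' - q^4 * ν' ^ 2 + -1 / (q ^ (n : ℤ) + q ^ (-(n : ℤ))) ^ 2) • w = 0 := by
    rw [← e1m_eig hrep ν' w hwA, hw1, map_zero]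
  have h5 := (smul_eq_zero.1 h4).resolve_right hw0
  rw [factB hq hq' hn _ ν' rfl] at h5
  have h6 := (mul_eq_zero.1 (neg_eq_zero.1 h5)).resolve_left (pow_ne_zero 4 hq)
  have h6' := mul_eq_zero.1 h6
  have hμν' : μ = q ^ (2 * (-(i:ℤ))) * ν' := by
    rw [hν', ← mul_assoc, ← zpow_add₀ hq]
    norm_num
  have hja : 0 ≤ (j : ℤ) := Int.natCast_nonneg j
  have hia : 0 ≤ (i : ℤ) := Int.natCast_nonneg i
  have hcase1 : μ = L q n (-(j:ℤ)) ∨ μ = L q n ((n:ℤ) - j) := by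
    rcases h3 with h | h
    · left; rw [hμν, sub_eq_zero.1 h, Lshift hq, zero_sub]
    · right; rw [hμν, sub_eq_zero.1 h, Lshift hq]
  have hcase2 : μ = L q n (1 + i) ∨ μ = L q n ((n:ℤ) + 1 + i) := by
    rcases h6' with h | h
    · left
      rw [hμν', sub_eq_zero.1 h, Lshift hq, show (1:ℤ) - -(i:ℤ) = 1 + i by ring]
    · right
      rw [hμν', sub_eq_zero.1 h, Lshift hq, show (n:ℤ) + 1 - -(i:ℤ) = (n:ℤ)+1+i by ring]
  rcases hcase1 with h | h <;> rcases hcase2 with h' | h' <;>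
    have hind := L_inj hq hq' hn (h.symm.trans h')
  · omega
  · omega
  · exact ⟨1 + i, by omega, by omega, h'⟩
  · omega

include hq hq' hn hrep in
lemma no_eig_out [FiniteDimensional ℂ V] (hA : Function.Bijective ⇑A) (k : ℤ)
    (hk : k < 1 ∨ (n : ℤ) < k) (x : V) (hx : A x = L q n k • x) : x = 0 := by
  by_contra h0
  obtain ⟨k', h1, h2, h3⟩ := eig_class hq hq' hn hrep hA _ x h0 hx
  have := L_inj hq hq' hn h3
  omega

include hq hq' hn hrep in
lemma ker_sq [FiniteDimensional ℂ V] (hA : Function.Bijective ⇑A) :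
    ∀ (m : ℕ) (k : ℤ), 1 ≤ k → k ≤ (n : ℤ) → k = (n : ℤ) - m →
      ∀ x : V, (A - L q n k • 1) ((A - L q n k • 1) x) = 0 → (A - L q n k • 1) x = 0 := by
  intro m
  induction m with
  | zero =>
    intro k hk1 hk2 hkm x h
    obtain rfl : k = (n : ℤ) := by omega
    have hd : (A - L q n ((n:ℤ)+1) • 1) ((A - L q n ((n:ℤ)+1) • 1) (e1 x))
        = (q ^ 2)⁻¹ • ((q ^ 2)⁻¹ •
            e1 ((A - L q n (n:ℤ) • 1) ((A - L q n (n:ℤ) • 1) x))) := by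
      rw [comm1pt hq hrep, map_smul, comm1pt hq hrep]
    rw [h, map_zero, smul_zero, smul_zero] at hd
    have hw : (A - L q n ((n:ℤ)+1) • 1) (e1 x) = 0 := by
      apply no_eig_out hq hq' hn hrep hA ((n:ℤ)+1) (by omega)
      exact (pker _ _ _).1 hd
    have he1x : e1 x = 0 := by
      apply no_eig_out hq hq' hn hrep hA ((n:ℤ)+1) (by omega)
      exact (pker _ _ _).1 hw
    have hme : (em * e1) x = 0 := by rw [Module.End.mul_apply, he1x, map_zero]
    rw [fact_me1 hq hq' hn hrep] at hme
    simp only [LinearMap.neg_apply, Module.End.mul_apply, neg_eq_zero] at hme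
    have hy : A ((A - L q n (n:ℤ) • 1) x) = L q n 0 • ((A - L q n (n:ℤ) • 1) x) :=
      (pker _ _ _).1 hme
    exact no_eig_out hq hq' hn hrep hA 0 (by omega) _ hy
  | succ m ih =>
    intro k hk1 hk2 hkm x h
    have hq2 : ((q ^ 2)⁻¹ : ℂ) ≠ 0 := inv_ne_zero (pow_ne_zero 2 hq)
    have hd : (A - L q n (k+1) • 1) ((A - L q n (k+1) • 1) (e1 x))
        = (q ^ 2)⁻¹ • ((q ^ 2)⁻¹ •
            e1 ((A - L q n k • 1) ((A - L q n k • 1) x))) := by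
      rw [comm1pt hq hrep, map_smul, comm1pt hq hrep]
    rw [h, map_zero, smul_zero, smul_zero] at hd
    have hw : (A - L q n (k+1) • 1) (e1 x) = 0 := ih (k+1) (by omega) (by omega) (by omega) _ hd
    rw [comm1pt hq hrep] at hw
    have he1y : e1 ((A - L q n k • 1) x) = 0 := by
      rcases smul_eq_zero.1 hw with h' | h'
      · exact absurd h' hq2
      · exact h'
    have hyA : A ((A - L q n k • 1) x) = L q n k • ((A - L q n k • 1) x) := (pker _ _ _).1 h
    have hme : em (e1 ((A - L q n k • 1) x)) = 0 := by rw [he1y, map_zero]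
    rw [me1_eig hrep _ _ hyA] at hme
    rcases smul_eq_zero.1 hme with h' | h'
    · exfalso
      rw [factA hq hq' hn _ _ rfl] at h'
      rcases mul_eq_zero.1 (neg_eq_zero.1 h') with h'' | h'' <;>
        · have := L_inj hq hq' hn (sub_eq_zero.1 h'')
          omega
    · exact h'

include hq hq' hn hrep in
lemma maxgen_le [FiniteDimensional ℂ V] (hA : Function.Bijective ⇑A) (k : ℤ)
    (hk1 : 1 ≤ k) (hk2 : k ≤ (n : ℤ)) :
    A.maxGenEigenspace (L q n k) ≤ LinearMap.ker (A - L q n k • 1) := by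
  have key : ∀ (m : ℕ) (x : V), ((A - L q n k • 1) ^ m) x = 0 → (A - L q n k • 1) x = 0 := by
    intro m
    induction m with
    | zero =>
      intro x hm
      simp only [pow_zero, Module.End.one_apply] at hm
      rw [hm, map_zero]
    | succ m ih =>
      intro x hm
      rw [pow_succ, Module.End.mul_apply] at hm
      exact ker_sq hq hq' hn hrep hA (n - k).toNat k hk1 hk2 (by omega) x (ih _ hm)
  intro x hx
  obtain ⟨m, hm⟩ := (Module.End.mem_maxGenEigenspace _ _ _).1 hx
  exact LinearMap.mem_ker.2 (key m x hm)

include hrep in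
lemma maxgen_bot (μ : ℂ) (h : ∀ x : V, A x = μ • x → x = 0) :
    A.maxGenEigenspace μ = ⊥ := by
  have key : ∀ (m : ℕ) (x : V), ((A - μ • 1) ^ m) x = 0 → x = 0 := by
    intro m
    induction m with
    | zero =>
      intro x hm
      simpa using hm
    | succ m ih =>
      intro x hm
      rw [pow_succ, Module.End.mul_apply] at hm
      exact h x ((pker _ _ _).1 (ih _ hm))
  rw [eq_bot_iff]
  intro x hx
  obtain ⟨m, hm⟩ := (Module.End.mem_maxGenEigenspace _ _ _).1 hx
  simpa using key m x hm

include hq hq' hn hrep in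
lemma sup_top [FiniteDimensional ℂ V] (hA : Function.Bijective ⇑A) :
    (⨆ k : Fin n, LinearMap.ker (A - L q n (((k : ℕ) : ℤ) + 1) • 1)) = ⊤ := by
  rw [eq_top_iff, ← Module.End.iSup_maxGenEigenspace_eq_top A]
  apply iSup_le
  intro μ
  by_cases hμ : ∀ x : V, A x = μ • x → x = 0
  · rw [maxgen_bot hrep μ hμ]
    exact bot_le
  · push_neg at hμ
    obtain ⟨x, hx, hx0⟩ := hμ
    obtain ⟨k, hk1, hk2, rfl⟩ := eig_class hq hq' hn hrep hA μ x hx0 hx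
    refine le_trans (maxgen_le hq hq' hn hrep hA k hk1 hk2) ?_
    refine le_iSup_of_le ⟨k.toNat - 1, by omega⟩ ?_
    have hkk : (((k.toNat - 1 : ℕ) : ℤ) : ℤ) + 1 = k := by omega
    rw [show ((((⟨k.toNat - 1, by omega⟩ : Fin n) : ℕ) : ℤ) + 1) = k by simp; omega]

include hq hq' hn in
lemma indepE :
    iSupIndep (fun k : Fin n => LinearMap.ker (A - L q n (((k : ℕ) : ℤ) + 1) • 1)) := by
  have hinj : Function.Injective (fun k : Fin n => L q n (((k : ℕ) : ℤ) + 1)) := by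
    intro a b hab
    have := L_inj hq hq' hn hab
    exact Fin.ext (by omega)
  have h := (Module.End.eigenspaces_iSupIndep A).comp hinj
  have heq : (A.eigenspace ∘ fun k : Fin n => L q n (((k : ℕ) : ℤ) + 1))
      = fun k : Fin n => LinearMap.ker (A - L q n (((k : ℕ) : ℤ) + 1) • 1) := by
    funext k
    simp only [Function.comp_apply, Module.End.eigenspace_def]
  rwa [heq] at h

include hq hq' hn hrep in
lemma e1_inj (k : ℤ) (hk1 : 1 ≤ k) (hk2 : k ≤ (n : ℤ) - 1) (x : V)
    (hx : A x = L q n k • x) (h0 : e1 x = 0) : x = 0 := by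
  have h := me1_eig hrep _ _ hx
  rw [h0, map_zero] at h
  rcases smul_eq_zero.1 h.symm with h' | h'
  · exfalso
    rw [factA hq hq' hn _ _ rfl] at h'
    rcases mul_eq_zero.1 (neg_eq_zero.1 h') with h'' | h'' <;>
      · have := L_inj hq hq' hn (sub_eq_zero.1 h'')
        omega
  · exact h'

include hq hq' hn hrep in
lemma e1_surj (k : ℤ) (hk1 : 1 ≤ k) (hk2 : k ≤ (n : ℤ) - 1) (y : V)
    (hy : A y = L q n (k+1) • y) : ∃ x : V, A x = L q n k • x ∧ e1 x = y := by
  set β := q ^ 2 * L q n (k+1) - q ^ 4 * L q n (k+1) ^ 2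
      + -1 / (q ^ (n : ℤ) + q ^ (-(n : ℤ))) ^ 2 with hβ
  have hβ0 : β ≠ 0 := by
    rw [hβ, factB hq hq' hn _ _ rfl]
    intro hc
    rcases mul_eq_zero.1 (neg_eq_zero.1 hc) with h'' | h''
    · exact pow_ne_zero 4 hq h''
    · rcases mul_eq_zero.1 h'' with h3 | h3 <;>
        · have := L_inj hq hq' hn (sub_eq_zero.1 h3)
          omega
  have hLp : q ^ 2 * L q n (k+1) = L q n k := by
    have h := L_pred (n := n) hq (k+1)
    rw [add_sub_cancel_right] at h
    exact h.symm
  refine ⟨β⁻¹ • em y, ?_, ?_⟩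
  · rw [map_smul, em_eig hq hrep _ _ hy, hLp, smul_smul, smul_smul, mul_comm]
  · rw [map_smul, e1m_eig hrep _ _ hy, ← hβ, smul_smul, inv_mul_cancel₀ hβ0, one_smul]

include hq hrep in
lemma e1_maps (k : ℤ) (x : V) (hx : A x = L q n k • x) : A (e1 x) = L q n (k+1) • e1 x := by
  rw [e1_eig hq hrep _ _ hx, L_succ (n := n) hq]

include hq hrep in
lemma em_maps (k : ℤ) (x : V) (hx : A x = L q n k • x) : A (em x) = L q n (k-1) • em x := by
  rw [em_eig hq hrep _ _ hx, L_pred (n := n) hq]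

end Ops
end Stmt6Aux

open Stmt6Aux in
/-- In a finite-dimensional Podleś representation with parameter `c(n) = −1/(qⁿ+q⁻ⁿ)²`
with invertible `A`: the space is the direct sum of the eigenspaces of `A` for the eigenvalues
`λ_k = q^(n−2k)/(qⁿ+q⁻ⁿ)`, `k = 1,…,n`; `e₁` restricts to an isomorphism from the `λ_k`- onto
the `λ_{k+1}`-eigenspace; all eigenspaces have the same dimension `d` and `dim V = n·d`; and `V`
is the direct sum of `d` subspaces of dimension `n`, each invariant under `e₋₁, e₁, A`. -/
theorem stmt6 {V : Type*} [AddCommGroup V] [Module ℂ V] [FiniteDimensional ℂ V]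
    (q : ℂ) (hq : q ≠ 0) (hq' : ∀ k : ℕ, 0 < k → q ^ k ≠ 1)
    (n : ℕ) (hn : 1 ≤ n)
    (em e1 A : Module.End ℂ V)
    (hrep : PodlesRep q (-1 / (q ^ (n : ℤ) + q ^ (-(n : ℤ))) ^ 2) em e1 A)
    (hA : Function.Bijective ⇑A) :
    let lam : ℕ → ℂ := fun k => q ^ ((n : ℤ) - 2 * (k : ℤ)) / (q ^ (n : ℤ) + q ^ (-(n : ℤ)))
    let E : ℕ → Submodule ℂ V := fun k => LinearMap.ker (A - lam k • (1 : Module.End ℂ V))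
    (iSupIndep fun k : Fin n => E ((k : ℕ) + 1)) ∧
    (⨆ k : Fin n, E ((k : ℕ) + 1)) = ⊤ ∧
    (∀ k : ℕ, 1 ≤ k → k ≤ n - 1 →
      (∀ x ∈ E k, e1 x ∈ E (k + 1)) ∧
      (∀ x ∈ E k, e1 x = 0 → x = 0) ∧
      (∀ y ∈ E (k + 1), ∃ x ∈ E k, e1 x = y)) ∧
    ∃ d : ℕ,
      (∀ k : ℕ, 1 ≤ k → k ≤ n → Module.finrank ℂ (E k) = d) ∧
      Module.finrank ℂ V = n * d ∧
      ∃ Ws : Fin d → Submodule ℂ V,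
        iSupIndep Ws ∧ (⨆ i, Ws i) = ⊤ ∧
        ∀ i, Module.finrank ℂ (Ws i) = n ∧
          (∀ x ∈ Ws i, em x ∈ Ws i) ∧ (∀ x ∈ Ws i, e1 x ∈ Ws i) ∧
          (∀ x ∈ Ws i, A x ∈ Ws i) := by
  intro lam E
  classical
  have hE : ∀ k : ℕ, E k = LinearMap.ker (A - L q n (k : ℤ) • 1) := fun k => rfl
  have hc1 : ∀ k : ℕ, ((k + 1 : ℕ) : ℤ) = (k : ℤ) + 1 := fun k => by push_cast; ring
  have hEk' : ∀ k : ℕ, E (k + 1) = LinearMap.ker (A - L q n ((k : ℤ) + 1) • 1) := fun k => by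
    rw [hE, hc1]
  have hmem : ∀ (j : ℤ) (x : V),
      x ∈ LinearMap.ker (A - L q n j • 1) ↔ A x = L q n j • x := fun j x => by
    rw [LinearMap.mem_ker]; exact pker A _ x
  have hfam : (fun k : Fin n => E ((k : ℕ) + 1))
      = fun k : Fin n => LinearMap.ker (A - L q n (((k : ℕ) : ℤ) + 1) • 1) :=
    funext fun k => hEk' (k : ℕ)
  have hindep : iSupIndep (fun k : Fin n => E ((k : ℕ) + 1)) := by
    rw [hfam]; exact indepE hq hq' hn
  have hsupE : (⨆ k : Fin n, E ((k : ℕ) + 1)) = ⊤ := by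
    rw [hfam]; exact sup_top hq hq' hn hrep hA
  refine ⟨hindep, hsupE, ?_, ?_⟩
  · -- the e1-isomorphism statements
    intro k hk1 hk2
    have hkz1 : (1 : ℤ) ≤ (k : ℤ) := by omega
    have hkz2 : (k : ℤ) ≤ (n : ℤ) - 1 := by omega
    refine ⟨?_, ?_, ?_⟩
    · intro x hx
      rw [hE] at hx
      rw [hEk', hmem]
      exact e1_maps hq hrep _ _ ((hmem _ _).1 hx)
    · intro x hx h0
      rw [hE] at hx
      exact e1_inj hq hq' hn hrep (k : ℤ) hkz1 hkz2 x ((hmem _ _).1 hx) h0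
    · intro y hy
      rw [hEk'] at hy
      obtain ⟨x, hx, he⟩ := e1_surj hq hq' hn hrep (k : ℤ) hkz1 hkz2 y ((hmem _ _).1 hy)
      refine ⟨x, ?_, he⟩
      rw [hE]
      exact (hmem _ _).2 hx
  -- ranks and Ws
  set d := Module.finrank ℂ ↥(E 1) with hd
  have hstep : ∀ k : ℕ, 1 ≤ k → k + 1 ≤ n →
      Module.finrank ℂ ↥(E k) = Module.finrank ℂ ↥(E (k + 1)) := by
    intro k hk1 hk2
    have hkz1 : (1 : ℤ) ≤ (k : ℤ) := by omega
    have hkz2 : (k : ℤ) ≤ (n : ℤ) - 1 := by omega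
    have hmt : ∀ x ∈ E k, e1 x ∈ E (k + 1) := by
      intro x hx
      rw [hE] at hx
      rw [hEk', hmem]
      exact e1_maps hq hrep _ _ ((hmem _ _).1 hx)
    have hbij : Function.Bijective (e1.restrict hmt) := by
      constructor
      · intro a b hab
        have hval : e1 (a : V) = e1 (b : V) := congrArg Subtype.val hab
        have hsub : e1 ((a : V) - (b : V)) = 0 := by rw [map_sub, hval, sub_self]
        have haA : A (a : V) = L q n (k : ℤ) • (a : V) := (hmem _ _).1 (hE k ▸ a.2)
        have hbA : A (b : V) = L q n (k : ℤ) • (b : V) := (hmem _ _).1 (hE k ▸ b.2)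
        have hABsub : A ((a : V) - (b : V)) = L q n (k : ℤ) • ((a : V) - (b : V)) := by
          rw [map_sub, haA, hbA, smul_sub]
        have := e1_inj hq hq' hn hrep (k : ℤ) hkz1 hkz2 _ hABsub hsub
        exact Subtype.ext (sub_eq_zero.1 this)
      · rintro ⟨y, hy⟩
        obtain ⟨x, hx, he⟩ := e1_surj hq hq' hn hrep (k : ℤ) hkz1 hkz2 y
          ((hmem _ _).1 (hEk' k ▸ hy))
        refine ⟨⟨x, ?_⟩, ?_⟩
        · rw [hE]; exact (hmem _ _).2 hx
        · exact Subtype.ext he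
    exact (LinearEquiv.ofBijective _ hbij).finrank_eq
  have hrank : ∀ k : ℕ, 1 ≤ k → k ≤ n → Module.finrank ℂ ↥(E k) = d := by
    intro k
    induction k with
    | zero => omega
    | succ k ih =>
      intro h1 h2
      rcases Nat.eq_zero_or_pos k with hk0 | hk0
      · subst hk0; rfl
      · rw [← hstep k (by omega) (by omega)]
        exact ih (by omega) (by omega)
  let b0 : Module.Basis (Fin d) ℂ ↥(E 1) := Module.finBasis ℂ ↥(E 1)
  let xx : Fin d → V := fun i => ((b0 i : ↥(E 1)) : V)
  have hxxE : ∀ i, A (xx i) = L q n 1 • xx i := by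
    intro i
    have := (hmem ((1 : ℕ) : ℤ) (xx i)).1 (hE 1 ▸ (b0 i).2)
    simpa using this
  have hxnz : ∀ i, xx i ≠ 0 := by
    intro i h
    exact b0.ne_zero i (Subtype.ext h)
  have hxli : LinearIndependent ℂ xx :=
    b0.linearIndependent.map' (E 1).subtype (Submodule.ker_subtype _)
  have hxspan : Submodule.span ℂ (Set.range xx) = E 1 := by
    have h1 : Set.range xx = (E 1).subtype '' (Set.range b0) := by
      rw [← Set.range_comp]; rfl
    rw [h1, ← Submodule.map_span, b0.span_eq, Submodule.map_top, Submodule.range_subtype]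
  have hchain : ∀ (m : ℕ) (k : ℕ), 1 ≤ k → k + m ≤ n → ∀ z : V,
      A z = L q n (k : ℤ) • z → (e1 ^ m) z = 0 → z = 0 := by
    intro m
    induction m with
    | zero =>
      intro k _ _ z _ h
      simpa using h
    | succ m ih =>
      intro k hk1 hkm z hz h
      rw [pow_succ, Module.End.mul_apply] at h
      have hz1 : A (e1 z) = L q n ((k : ℤ) + 1) • e1 z := e1_maps hq hrep _ _ hz
      have h0 : e1 z = 0 := by
        refine ih (k + 1) (by omega) (by omega) (e1 z) ?_ h
        rw [hc1]
        exact hz1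
      exact e1_inj hq hq' hn hrep (k : ℤ) (by omega) (by omega) z hz h0
  have hpow : ∀ (m : ℕ) (i : Fin d),
      A ((e1 ^ m) (xx i)) = L q n ((m : ℤ) + 1) • (e1 ^ m) (xx i) := by
    intro m i
    induction m with
    | zero => simpa using hxxE i
    | succ m ih =>
      rw [pow_succ', Module.End.mul_apply, e1_maps hq hrep _ _ ih,
        show ((m : ℤ) + 1) + 1 = ((m + 1 : ℕ) : ℤ) + 1 by push_cast; ring]
  let vv : Fin n → Fin d → V := fun j i => (e1 ^ (j : ℕ)) (xx i)
  have hvvE : ∀ (j : Fin n) (i : Fin d),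
      A (vv j i) = L q n (((j : ℕ) : ℤ) + 1) • vv j i := fun j i => hpow (j : ℕ) i
  have hvvnz : ∀ j i, vv j i ≠ 0 := by
    intro j i h
    refine hxnz i (hchain (j : ℕ) 1 le_rfl (by omega) (xx i) ?_ h)
    simpa using hxxE i
  have hvli : ∀ j : Fin n, LinearIndependent ℂ (vv j) := by
    intro j
    refine hxli.map (f := e1 ^ (j : ℕ)) ?_
    rw [hxspan]
    rw [Submodule.disjoint_def]
    intro x hx1 hx2
    refine hchain (j : ℕ) 1 le_rfl (by omega) x ?_ (LinearMap.mem_ker.1 hx2)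
    have := (hmem ((1 : ℕ) : ℤ) x).1 (hE 1 ▸ hx1)
    simpa using this
  have hvspan : ∀ j : Fin n, Submodule.span ℂ (Set.range (vv j)) = E ((j : ℕ) + 1) := by
    suffices h : ∀ m : ℕ, m + 1 ≤ n →
        Submodule.span ℂ (Set.range fun i => (e1 ^ m) (xx i)) = E (m + 1) by
      intro j; exact h (j : ℕ) (by omega)
    intro m
    induction m with
    | zero =>
      intro h1
      have h2 : (fun i : Fin d => (e1 ^ 0) (xx i)) = xx := by
        funext i; simp
      rw [h2]
      exact hxspan
    | succ m ih =>
      intro h1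
      have h2 : (fun i : Fin d => (e1 ^ (m + 1)) (xx i))
          = ⇑e1 ∘ fun i : Fin d => (e1 ^ m) (xx i) := by
        funext i
        rw [Function.comp_apply, pow_succ', Module.End.mul_apply]
      rw [h2, Set.range_comp, Submodule.span_image, ih (by omega)]
      apply le_antisymm
      · rw [Submodule.map_le_iff_le_comap]
        intro x hx
        rw [Submodule.mem_comap, hEk' (m + 1), hmem]
        have hx' : A x = L q n ((m : ℤ) + 1) • x := (hmem _ _).1 (hEk' m ▸ hx)
        have h3 := e1_maps hq hrep _ _ hx'
        rw [h3, show ((m : ℤ) + 1) + 1 = ((m + 1 : ℕ) : ℤ) + 1 by push_cast; ring]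
      · intro y hy
        have hy' : A y = L q n (((m : ℤ) + 1) + 1) • y := by
          have := (hmem _ _).1 (hEk' (m + 1) ▸ hy)
          rw [show (((m + 1 : ℕ) : ℤ) + 1) = ((m : ℤ) + 1) + 1 by push_cast; ring] at this
          exact this
        obtain ⟨x, hx, he⟩ := e1_surj hq hq' hn hrep ((m : ℤ) + 1) (by omega) (by omega) y hy'
        exact Submodule.mem_map.2 ⟨x, by rw [hEk' m]; exact (hmem _ _).2 hx, he⟩
  have hint : DirectSum.IsInternal (fun k : Fin n => E ((k : ℕ) + 1)) :=
    (DirectSum.isInternal_submodule_iff_iSupIndep_and_iSup_eq_top _).2 ⟨hindep, hsupE⟩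
  let bj : ∀ j : Fin n, Module.Basis (Fin d) ℂ ↥(E ((j : ℕ) + 1)) := fun j =>
    (Module.Basis.span (hvli j)).map (LinearEquiv.ofEq _ _ (hvspan j))
  let B := hint.collectedBasis bj
  have hB : ∀ a : (Σ _ : Fin n, Fin d), B a = vv a.1 a.2 := by
    intro a
    rw [show B a = ((bj a.1 a.2 : ↥(E ((a.1 : ℕ) + 1))) : V) from congrFun (hint.collectedBasis_coe bj) a]
    show ((LinearEquiv.ofEq _ _ (hvspan a.1)) (Module.Basis.span (hvli a.1) a.2) : V) = vv a.1 a.2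
    rw [LinearEquiv.coe_ofEq_apply, Module.Basis.span_apply]
  have hfr : Module.finrank ℂ V = n * d := by
    rw [Module.finrank_eq_card_basis B, Fintype.card_sigma]
    simp [Finset.card_univ]
  have hBli : LinearIndependent ℂ (fun a : (Σ _ : Fin n, Fin d) => vv a.1 a.2) := by
    have h := B.linearIndependent
    rwa [show ⇑B = fun a : (Σ _ : Fin n, Fin d) => vv a.1 a.2 from funext hB] at h
  let Ws : Fin d → Submodule ℂ V := fun i =>
    Submodule.span ℂ (Set.range fun j : Fin n => vv j i)
  have hWseq : ∀ i, Ws i = Submodule.span ℂ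
      ((fun a : (Σ _ : Fin n, Fin d) => vv a.1 a.2) '' {a | a.2 = i}) := by
    intro i
    have hset : (Set.range fun j : Fin n => vv j i)
        = ((fun a : (Σ _ : Fin n, Fin d) => vv a.1 a.2) '' {a | a.2 = i}) := by
      ext y
      constructor
      · rintro ⟨j, rfl⟩
        exact ⟨⟨j, i⟩, rfl, rfl⟩
      · rintro ⟨⟨j, i'⟩, hi, rfl⟩
        have h5 : i' = i := hi
        subst h5
        exact ⟨j, rfl⟩
    simp only [Ws]
    rw [hset]
  refine ⟨d, hrank, hfr, Ws, ?_, ?_, ?_⟩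
  · -- iSupIndep Ws
    rw [iSupIndep_def]
    intro i
    rw [hWseq]
    refine (hBli.disjoint_span_image (t := {a | a.2 = i}ᶜ) disjoint_compl_right).mono_right ?_
    refine iSup_le fun i' => iSup_le fun hne => ?_
    rw [hWseq]
    refine Submodule.span_mono (Set.image_mono ?_)
    intro a ha
    simp only [Set.mem_setOf_eq] at ha
    simp only [Set.mem_compl_iff, Set.mem_setOf_eq, ha]
    exact hne
  · -- sup Ws = ⊤
    rw [eq_top_iff, ← hsupE]
    refine iSup_le fun j => ?_
    rw [← hvspan j]
    refine Submodule.span_le.2 ?_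
    rintro y ⟨i, rfl⟩
    exact Submodule.mem_iSup_of_mem i (Submodule.subset_span ⟨j, rfl⟩)
  · intro i
    refine ⟨?_, ?_, ?_, ?_⟩
    · -- finrank Ws i = n
      have hli : LinearIndependent ℂ (fun j : Fin n => vv j i) := by
        have h := hBli.comp (fun j : Fin n => (⟨j, i⟩ : Σ _ : Fin n, Fin d))
          (fun a b hab => by simpa using congrArg Sigma.fst hab)
        exact h
      rw [show Ws i = Submodule.span ℂ (Set.range fun j : Fin n => vv j i) from rfl,
        finrank_span_eq_card hli, Fintype.card_fin]
    · -- em invariance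
      intro x hx
      refine Submodule.span_induction (p := fun y _ => em y ∈ Ws i) ?_ ?_ ?_ ?_ hx
      · rintro y ⟨j, rfl⟩
        show em (vv j i) ∈ Ws i
        by_cases hj : (j : ℕ) = 0
        · have h0 : vv j i = xx i := by
            show (e1 ^ (j : ℕ)) (xx i) = xx i
            rw [hj, pow_zero, Module.End.one_apply]
          rw [h0]
          have hemA : A (em (xx i)) = L q n 0 • em (xx i) := by
            have := em_maps hq hrep 1 _ (hxxE i)
            norm_num at this
            exact this
          rw [no_eig_out hq hq' hn hrep hA 0 (by omega) _ hemA]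
          exact Submodule.zero_mem _
        · obtain ⟨j', hj'⟩ : ∃ j' : ℕ, (j : ℕ) = j' + 1 := ⟨(j : ℕ) - 1, by omega⟩
          have hsplit : vv j i = e1 ((e1 ^ j') (xx i)) := by
            show (e1 ^ (j : ℕ)) (xx i) = e1 ((e1 ^ j') (xx i))
            rw [hj', pow_succ', Module.End.mul_apply]
          rw [hsplit, me1_eig hrep _ _ (hpow j' i)]
          refine Submodule.smul_mem _ _ (Submodule.subset_span ⟨⟨j', by omega⟩, rfl⟩)
      · show em (0 : V) ∈ Ws i
        rw [map_zero]
        exact Submodule.zero_mem _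
      · intro a b _ _ ha hb
        rw [map_add]
        exact Submodule.add_mem _ ha hb
      · intro c a _ ha
        rw [map_smul]
        exact Submodule.smul_mem _ _ ha
    · -- e1 invariance
      intro x hx
      refine Submodule.span_induction (p := fun y _ => e1 y ∈ Ws i) ?_ ?_ ?_ ?_ hx
      · rintro y ⟨j, rfl⟩
        show e1 (vv j i) ∈ Ws i
        have hsplit : e1 (vv j i) = (e1 ^ ((j : ℕ) + 1)) (xx i) := by
          show e1 ((e1 ^ (j : ℕ)) (xx i)) = (e1 ^ ((j : ℕ) + 1)) (xx i)
          rw [pow_succ', Module.End.mul_apply]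
        by_cases hjn : (j : ℕ) + 1 < n
        · rw [hsplit]
          exact Submodule.subset_span ⟨⟨(j : ℕ) + 1, hjn⟩, rfl⟩
        · have hjtop : (j : ℕ) + 1 = n := by omega
          have h1 : A (e1 (vv j i)) = L q n ((n : ℤ) + 1) • e1 (vv j i) := by
            have h2 := e1_maps hq hrep _ _ (hvvE j i)
            rw [show (((j : ℕ) : ℤ) + 1) + 1 = (n : ℤ) + 1 by omega] at h2
            exact h2
          rw [no_eig_out hq hq' hn hrep hA ((n : ℤ) + 1) (by omega) _ h1]
          exact Submodule.zero_mem _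
      · show e1 (0 : V) ∈ Ws i
        rw [map_zero]
        exact Submodule.zero_mem _
      · intro a b _ _ ha hb
        rw [map_add]
        exact Submodule.add_mem _ ha hb
      · intro c a _ ha
        rw [map_smul]
        exact Submodule.smul_mem _ _ ha
    · -- A invariance
      intro x hx
      refine Submodule.span_induction (p := fun y _ => A y ∈ Ws i) ?_ ?_ ?_ ?_ hx
      · rintro y ⟨j, rfl⟩
        show A (vv j i) ∈ Ws i
        rw [hvvE j i]
        exact Submodule.smul_mem _ _ (Submodule.subset_span ⟨j, rfl⟩)
      · show A (0 : V) ∈ Ws i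
        rw [map_zero]
        exact Submodule.zero_mem _
      · intro a b _ _ ha hb
        rw [map_add]
        exact Submodule.add_mem _ ha hb
      · intro c a _ ha
        rw [map_smul]
        exact Submodule.smul_mem _ _ ha
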